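/- The greedy selection via a separator yields a representative family: suppose F is a family of subsets of E such that for every p-subset X and every (k−p)-subset Y of E \ X, some F ∈ F satisfies X ⊆ F and Y ∩ F = ∅. Order S = {S_1,...,S_m} by nonincreasing weight, and let Ŝ = {S_i : χ(S_i) \ ⋃_{j<i} χ(S_j) ≠ ∅} where χ(S) = {F ∈ F : S ⊆ F}. Then Ŝ max-represents S. -/
import Mathlib


open Finset

/-- `chi F S` is the subfamily of sets in `F` containing `S`. -/
def chi {E : Type*} [DecidableEq E] (F : Finset (Finset E)) (S : Finset E) :
    Finset (Finset E) :=
  F.filter (fun f => S ⊆ f)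

/-- Greedy selection via a separator yields a max-representative family. -/
theorem stmt14 {E : Type*} [DecidableEq E] [Fintype E] (k p m : ℕ)
    (hp : 1 ≤ p) (hpk : p ≤ k) (hkn : k ≤ Fintype.card E)
    (S : Fin m → Finset E) (hcard : ∀ i, (S i).card = p)
    (w : Finset E → ℝ) (hw : ∀ i j : Fin m, i ≤ j → w (S j) ≤ w (S i))
    (F : Finset (Finset E))
    (hsep : ∀ X Y : Finset E, X.card = p → Y.card = k - p → Disjoint X Y →
      ∃ f ∈ F, X ⊆ f ∧ Disjoint Y f)
    (Shat : Finset (Finset E))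
    (hShat : Shat = Finset.image S ((Finset.univ : Finset (Fin m)).filter
      (fun i => ¬ (chi F (S i) ⊆
        (Finset.univ.filter (fun j => j < i)).biUnion (fun j => chi F (S j)))))) :
    Shat ⊆ Finset.image S Finset.univ ∧
    ∀ i : Fin m, ∀ Y : Finset E, Disjoint (S i) Y → Y.card ≤ k - p →
      ∃ X' ∈ Shat, X' ∩ Y = ∅ ∧ w (S i) ≤ w X' := by
  constructor
  · subst hShat
    exact Finset.image_subset_image (Finset.filter_subset _ _)
  · suffices key : ∀ n : ℕ, ∀ i : Fin m, i.val < n → ∀ Y : Finset E,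
        Disjoint (S i) Y → Y.card ≤ k - p →
        ∃ X' ∈ Shat, X' ∩ Y = ∅ ∧ w (S i) ≤ w X' by
      exact fun i => key (i.val + 1) i (Nat.lt_succ_self _)
    intro n
    induction n with
    | zero => exact fun i h => absurd h (Nat.not_lt_zero _)
    | succ n IH' =>
      intro i hin Y hdisj hYcard
      have IH : ∀ j : Fin m, j < i → ∀ Y : Finset E,
          Disjoint (S j) Y → Y.card ≤ k - p →
          ∃ X' ∈ Shat, X' ∩ Y = ∅ ∧ w (S j) ≤ w X' :=
        fun j hji => IH' j (by have := Fin.lt_iff_val_lt_val.mp hji; omega)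
      -- extend Y to Y' of card k - p inside (S i)ᶜ
      have hYsub : Y ⊆ (S i)ᶜ := by
        intro y hy
        simp only [Finset.mem_compl]
        exact fun hyS => (Finset.disjoint_left.mp hdisj hyS) hy
      have hcompl : k - p ≤ ((S i)ᶜ : Finset E).card := by
        rw [Finset.card_compl, hcard i]
        omega
      obtain ⟨Y', hYY', hY'sub, hY'card⟩ :=
        Finset.exists_subsuperset_card_eq hYsub hYcard hcompl
      have hdisj' : Disjoint (S i) Y' := by
        rw [Finset.disjoint_right]
        intro a ha
        exact Finset.mem_compl.mp (hY'sub ha)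
      obtain ⟨f, hfF, hSf, hYf⟩ := hsep (S i) Y' (hcard i) hY'card hdisj'
      have hfchi : f ∈ chi F (S i) := Finset.mem_filter.mpr ⟨hfF, hSf⟩
      by_cases hsel : chi F (S i) ⊆
          (Finset.univ.filter (fun j => j < i)).biUnion (fun j => chi F (S j))
      · -- f belongs to some earlier chi
        obtain ⟨j, hj, hfj⟩ := Finset.mem_biUnion.mp (hsel hfchi)
        have hji : j < i := (Finset.mem_filter.mp hj).2
        have hSjf : S j ⊆ f := (Finset.mem_filter.mp hfj).2
        have hdisjY : Disjoint (S j) Y := by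
          refine Finset.disjoint_left.mpr fun a haS haY => ?_
          exact Finset.disjoint_left.mp hYf (hYY' haY) (hSjf haS)
        obtain ⟨X', hX', hX'Y, hwX'⟩ := IH j hji Y hdisjY hYcard
        exact ⟨X', hX', hX'Y, le_trans (hw j i (le_of_lt hji)) hwX'⟩
      · refine ⟨S i, ?_, ?_, le_refl _⟩
        · rw [hShat]
          exact Finset.mem_image.mpr ⟨i, Finset.mem_filter.mpr ⟨Finset.mem_univ _, hsel⟩, rfl⟩
        · exact Finset.disjoint_iff_inter_eq_empty.mp hdisj
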